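/- Let f : [a,b] → ℝ be such that f' is absolutely continuous and f'' ∈ L^∞([a,b]). Then the right-hand side of the companion inequality at x = (3a+b)/4, namely (1/64)(b-a)²‖f''‖_∞, is smaller than the right-hand side at x = (a+b)/2, namely (1/48)(b-a)²‖f''‖_∞; i.e., for all x ∈ [a,(a+b)/2], (1/3)[((a+3b)/4 - x)(x-a)² + ((a+b)/2 - x)³]/(b-a)³ · (b-a)² attains its minimum value (1/64)(b-a)² at x = (3a+b)/4. -/

import Mathlib

open Set

theorem bound_min_at_three_quarters
    (a b : ℝ) (hab : a < b) :
    (1/3) * (((a + 3*b)/4 - (3*a + b)/4) * ((3*a + b)/4 - a)^2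
        + ((a + b)/2 - (3*a + b)/4)^3) / (b - a)^3 * (b - a)^2
      = (1/64) * (b - a)^2 ∧
    ∀ x ∈ Icc a ((a + b)/2),
      (1/64) * (b - a)^2
        ≤ (1/3) * (((a + 3*b)/4 - x) * (x - a)^2 + ((a + b)/2 - x)^3)
            / (b - a)^3 * (b - a)^2 := by
  have hba : (0:ℝ) < b - a := by linarith
  constructor
  · field_simp
    ring
  · intro x hx
    obtain ⟨hx1, hx2⟩ := hx
    have hE : (1/3) * (((a + 3*b)/4 - x) * (x - a)^2 + ((a + b)/2 - x)^3)
            / (b - a)^3 * (b - a)^2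
        = ((((a + 3*b)/4 - x) * (x - a)^2 + ((a + b)/2 - x)^3)/3) / (b - a) := by
      field_simp
    rw [hE, le_div_iff₀ hba]
    nlinarith [mul_nonneg (mul_nonneg (sq_nonneg (x - a - (b - a)/4)) (by linarith : (0:ℝ) ≤ 5*(b-a)/8 - (x - a))) (sq_nonneg (b-a)), sq_nonneg (b-a), mul_pos hba hba]
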